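/- Let ℓ₁, ℓ₂, ℓ₃ be lines in P³ (2-dimensional subspaces of ℂ⁴) with primal Plücker matrices P₁, P₂, P₃, and let u ∈ ℂ⁴ be a vector not lying in any of the three subspaces ℓ₁, ℓ₂, ℓ₃. Then the three vectors P₁u, P₂u, P₃u ∈ ℂ⁴ are linearly dependent if and only if the three lines admit a transversal through u, i.e., there exists a 2-dimensional subspace W of ℂ⁴ with u ∈ W and W ∩ ℓ_i ≠ {0} for i = 1, 2, 3. -/

import Mathlib

open Matrix

/-- The primal Plücker matrix of a pair of vectors `x y : ℂ⁴`. -/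
noncomputable def primalMat (x y : Fin 4 → ℂ) : Matrix (Fin 4) (Fin 4) ℂ :=
  !![0, x 2 * y 3 - x 3 * y 2, -(x 1 * y 3 - x 3 * y 1), x 1 * y 2 - x 2 * y 1;
     -(x 2 * y 3 - x 3 * y 2), 0, x 0 * y 3 - x 3 * y 0, -(x 0 * y 2 - x 2 * y 0);
     x 1 * y 3 - x 3 * y 1, -(x 0 * y 3 - x 3 * y 0), 0, x 0 * y 1 - x 1 * y 0;
     -(x 1 * y 2 - x 2 * y 1), x 0 * y 2 - x 2 * y 0, -(x 0 * y 1 - x 1 * y 0), 0]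

section Aux

open Module Submodule

lemma PluckerAux.det4 (M : Matrix (Fin 4) (Fin 4) ℂ) : M.det =
    M 0 0 * (M 1 1 * (M 2 2 * M 3 3 - M 2 3 * M 3 2) - M 1 2 * (M 2 1 * M 3 3 - M 2 3 * M 3 1) + M 1 3 * (M 2 1 * M 3 2 - M 2 2 * M 3 1))
  - M 0 1 * (M 1 0 * (M 2 2 * M 3 3 - M 2 3 * M 3 2) - M 1 2 * (M 2 0 * M 3 3 - M 2 3 * M 3 0) + M 1 3 * (M 2 0 * M 3 2 - M 2 2 * M 3 0))
  + M 0 2 * (M 1 0 * (M 2 1 * M 3 3 - M 2 3 * M 3 1) - M 1 1 * (M 2 0 * M 3 3 - M 2 3 * M 3 0) + M 1 3 * (M 2 0 * M 3 1 - M 2 1 * M 3 0))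
  - M 0 3 * (M 1 0 * (M 2 1 * M 3 2 - M 2 2 * M 3 1) - M 1 1 * (M 2 0 * M 3 2 - M 2 2 * M 3 0) + M 1 2 * (M 2 0 * M 3 1 - M 2 1 * M 3 0)) := by
  have h1 : (Fin.succ 2 : Fin 4) = 3 := rfl
  have h2 : (Fin.castSucc 2 : Fin 4) = 2 := rfl
  rw [Matrix.det_succ_row_zero]
  simp [Fin.sum_univ_succ, Matrix.det_succ_row_zero, Fin.succAbove, h1, h2]
  ring

lemma PluckerAux.dot_eq_det (x y u v : Fin 4 → ℂ) :
    (primalMat x y *ᵥ u) ⬝ᵥ v = -(Matrix.of ![x, y, u, v]).det := by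
  rw [PluckerAux.det4]
  simp [primalMat, mulVec, dotProduct, Fin.sum_univ_four]
  ring

lemma PluckerAux.dot_x (x y u : Fin 4 → ℂ) : (primalMat x y *ᵥ u) ⬝ᵥ x = 0 := by
  rw [PluckerAux.dot_eq_det, Matrix.det_zero_of_row_eq (show (0:Fin 4) ≠ 3 by decide)
    (show (Matrix.of ![x,y,u,x]) 0 = (Matrix.of ![x,y,u,x]) 3 by rfl), neg_zero]

lemma PluckerAux.dot_y (x y u : Fin 4 → ℂ) : (primalMat x y *ᵥ u) ⬝ᵥ y = 0 := by
  rw [PluckerAux.dot_eq_det, Matrix.det_zero_of_row_eq (show (1:Fin 4) ≠ 3 by decide)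
    (show (Matrix.of ![x,y,u,y]) 1 = (Matrix.of ![x,y,u,y]) 3 by rfl), neg_zero]

lemma PluckerAux.dot_u (x y u : Fin 4 → ℂ) : (primalMat x y *ᵥ u) ⬝ᵥ u = 0 := by
  rw [PluckerAux.dot_eq_det, Matrix.det_zero_of_row_eq (show (2:Fin 4) ≠ 3 by decide)
    (show (Matrix.of ![x,y,u,u]) 2 = (Matrix.of ![x,y,u,u]) 3 by rfl), neg_zero]

lemma PluckerAux.range_three (a b c : Fin 4 → ℂ) : Set.range ![a, b, c] = {a, b, c} := by
  ext t
  simp [Matrix.range_cons, Matrix.range_empty]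
  tauto

lemma PluckerAux.range_two (a b : Fin 4 → ℂ) : Set.range ![a, b] = {a, b} := by
  ext t
  simp [Matrix.range_cons, Matrix.range_empty]
  tauto

/-- the dot-product functional -/
noncomputable def PluckerAux.dL (φ : Fin 4 → ℂ) : (Fin 4 → ℂ) →ₗ[ℂ] ℂ where
  toFun v := φ ⬝ᵥ v
  map_add' a b := dotProduct_add φ a b
  map_smul' c a := dotProduct_smul c φ a

lemma PluckerAux.finrank_four : finrank ℂ (Fin 4 → ℂ) = 4 := by simp

lemma PluckerAux.dot_line (x y u z : Fin 4 → ℂ)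
    (hz : z ∈ span ℂ ({x, y} : Set (Fin 4 → ℂ))) :
    (primalMat x y *ᵥ u) ⬝ᵥ z = 0 := by
  obtain ⟨a, b, rfl⟩ := Submodule.mem_span_pair.1 hz
  simp [dotProduct_add, dotProduct_smul, PluckerAux.dot_x, PluckerAux.dot_y]

lemma PluckerAux.mem_kerA (φ : Fin 3 → Fin 4 → ℂ) {v : Fin 4 → ℂ} :
    v ∈ LinearMap.ker (Matrix.of φ).mulVecLin ↔ ∀ i, φ i ⬝ᵥ v = 0 := by
  simp [LinearMap.mem_ker, mulVecLin_apply, mulVec, funext_iff]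

lemma PluckerAux.notLI_iff_ker (φ : Fin 3 → Fin 4 → ℂ) :
    ¬ LinearIndependent ℂ φ ↔
      2 ≤ finrank ℂ (LinearMap.ker (Matrix.of φ).mulVecLin) := by
  have hrank : (Matrix.of φ).rank = finrank ℂ (span ℂ (Set.range φ)) := by
    rw [Matrix.rank_eq_finrank_span_row]
    rfl
  have hrn : (Matrix.of φ).rank + finrank ℂ (LinearMap.ker (Matrix.of φ).mulVecLin) = 4 := by
    have := LinearMap.finrank_range_add_finrank_ker (Matrix.of φ).mulVecLin
    rw [Matrix.rank]
    simpa using this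
  have hle : finrank ℂ (span ℂ (Set.range φ)) ≤ 3 := by
    classical
    have := finrank_span_le_card (R := ℂ) (Set.range φ)
    refine this.trans ?_
    have : (Set.range φ).toFinset.card ≤ Fintype.card (Fin 3) := by
      simpa using Set.toFinset_range φ ▸ Finset.card_image_le
    simpa using this
  constructor
  · intro h
    have hne : finrank ℂ (span ℂ (Set.range φ)) ≠ 3 := by
      intro he
      exact h (linearIndependent_iff_card_eq_finrank_span.2
        (by simpa [Set.finrank] using he.symm))
    omega
  · intro h hLI
    have := finrank_span_eq_card hLI
    rw [Fintype.card_fin] at this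
    omega

lemma PluckerAux.ker_single (x y u : Fin 4 → ℂ) (h3 : LinearIndependent ℂ ![x, y, u])
    {v : Fin 4 → ℂ} (hv : (primalMat x y *ᵥ u) ⬝ᵥ v = 0) :
    v ∈ span ℂ ({x, y, u} : Set (Fin 4 → ℂ)) := by
  set T : Submodule ℂ (Fin 4 → ℂ) := span ℂ ({x, y, u} : Set (Fin 4 → ℂ)) with hT
  have hTfin : finrank ℂ T = 3 := by
    have := finrank_span_eq_card h3
    rwa [PluckerAux.range_three, Fintype.card_fin, ← hT] at this
  obtain ⟨w, hw⟩ := T.exists_of_finrank_lt (by rw [hTfin, PluckerAux.finrank_four]; norm_num)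
  have hwT : w ∉ T := by simpa using hw 1 one_ne_zero
  have h4 : LinearIndependent ℂ ![x, y, u, w] := by
    have : (![x, y, u, w] : Fin 4 → Fin 4 → ℂ) = Fin.snoc ![x, y, u] w := by
      funext i
      fin_cases i <;> simp [Fin.snoc] <;> rfl
    rw [this, linearIndependent_fin_snoc]
    exact ⟨h3, by rwa [PluckerAux.range_three]⟩
  have hdet : (Matrix.of ![x, y, u, w]).det ≠ 0 := by
    have : IsUnit (Matrix.of ![x, y, u, w]) :=
      Matrix.linearIndependent_rows_iff_isUnit.mp h4
    exact ((Matrix.isUnit_iff_isUnit_det _).mp this).ne_zero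
  set L := PluckerAux.dL (primalMat x y *ᵥ u) with hL
  have hLw : L w ≠ 0 := by
    show (primalMat x y *ᵥ u) ⬝ᵥ w ≠ 0
    rw [PluckerAux.dot_eq_det]
    simpa using hdet
  have hsur : LinearMap.range L = ⊤ := by
    rw [LinearMap.range_eq_top]
    intro c
    refine ⟨(c / L w) • w, ?_⟩
    rw [LinearMap.map_smul, smul_eq_mul]
    field_simp
  have hker : finrank ℂ (LinearMap.ker L) = 3 := by
    have := LinearMap.finrank_range_add_finrank_ker L
    rw [hsur, finrank_top, PluckerAux.finrank_four, finrank_self] at this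
    omega
  have hle : T ≤ LinearMap.ker L := by
    rw [hT, span_le]
    rintro t (rfl | rfl | rfl)
    · exact LinearMap.mem_ker.2 (PluckerAux.dot_x _ _ _)
    · exact LinearMap.mem_ker.2 (PluckerAux.dot_y _ _ _)
    · exact LinearMap.mem_ker.2 (PluckerAux.dot_u _ _ _)
  have heq : T = LinearMap.ker L := eq_of_le_of_finrank_le hle (by omega)
  have hv' : v ∈ LinearMap.ker L := LinearMap.mem_ker.2 hv
  rwa [← heq] at hv'

end Aux

/-- for a point `u` off three lines `ℓᵢ = span{xᵢ, yᵢ}`, the vectors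
`P₁u, P₂u, P₃u` are linearly dependent iff the three lines admit a transversal through `u`. -/
theorem dependent_iff_transversal_through_point
    (x y : Fin 3 → Fin 4 → ℂ)
    (hind : ∀ i, LinearIndependent ℂ ![x i, y i])
    (u : Fin 4 → ℂ)
    (hu : ∀ i, u ∉ Submodule.span ℂ {x i, y i}) :
    (¬ LinearIndependent ℂ
        ![primalMat (x 0) (y 0) *ᵥ u,
          primalMat (x 1) (y 1) *ᵥ u,
          primalMat (x 2) (y 2) *ᵥ u]) ↔
      ∃ W : Submodule ℂ (Fin 4 → ℂ), Module.finrank ℂ W = 2 ∧ u ∈ W ∧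
        ∀ i, W ⊓ Submodule.span ℂ {x i, y i} ≠ ⊥ := by
  open Module Submodule PluckerAux in
  set φ : Fin 3 → Fin 4 → ℂ :=
    ![primalMat (x 0) (y 0) *ᵥ u, primalMat (x 1) (y 1) *ᵥ u, primalMat (x 2) (y 2) *ᵥ u]
    with hφdef
  have hφ : ∀ i, φ i = primalMat (x i) (y i) *ᵥ u := by
    intro i; fin_cases i <;> rfl
  have h3 : ∀ i, LinearIndependent ℂ ![x i, y i, u] := by
    intro i
    have he : (![x i, y i, u] : Fin 3 → Fin 4 → ℂ) = Fin.snoc ![x i, y i] u := by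
      funext j
      fin_cases j <;> simp [Fin.snoc] <;> rfl
    rw [he, linearIndependent_fin_snoc]
    exact ⟨hind i, by rw [range_two]; exact hu i⟩
  have hu0 : u ≠ 0 := fun h => hu 0 (h ▸ zero_mem _)
  rw [notLI_iff_ker φ]
  constructor
  · intro h
    have huK : u ∈ LinearMap.ker (Matrix.of φ).mulVecLin := (mem_kerA φ).2 fun i => by rw [hφ i]; exact dot_u _ _ _
    have hnotle : ¬ (LinearMap.ker (Matrix.of φ).mulVecLin ≤ span ℂ ({u} : Set (Fin 4 → ℂ))) := by
      intro hle
      have := Submodule.finrank_mono hle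
      rw [finrank_span_singleton hu0] at this
      omega
    obtain ⟨v, hvK, hv⟩ := SetLike.not_le_iff_exists.1 hnotle
    have hvu : LinearIndependent ℂ ![v, u] := by
      refine linearIndependent_fin2.2 ⟨hu0, fun a ha => hv ?_⟩
      simp only [Matrix.cons_val_zero, Matrix.cons_val_one, Matrix.head_cons] at ha
      exact ha ▸ Submodule.smul_mem _ a (Submodule.mem_span_singleton_self u)
    refine ⟨span ℂ ({v, u} : Set (Fin 4 → ℂ)), ?_, subset_span (by simp), ?_⟩
    · have := finrank_span_eq_card hvu
      rwa [range_two, Fintype.card_fin] at this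
    · intro i
      have hvmem : v ∈ span ℂ ({x i, y i, u} : Set (Fin 4 → ℂ)) :=
        ker_single _ _ _ (h3 i) (by rw [← hφ i]; exact (mem_kerA φ).1 hvK i)
      have hset : ({x i, y i, u} : Set (Fin 4 → ℂ)) = insert u {x i, y i} := by
        ext t; simp; tauto
      rw [hset] at hvmem
      obtain ⟨a, z, hz, hvz⟩ := Submodule.mem_span_insert.1 hvmem
      have hzW : z ∈ span ℂ ({v, u} : Set (Fin 4 → ℂ)) := by
        have hvW : v ∈ span ℂ ({v, u} : Set (Fin 4 → ℂ)) := subset_span (by simp)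
        have huW : u ∈ span ℂ ({v, u} : Set (Fin 4 → ℂ)) := subset_span (by simp)
        have : z = v - a • u := by rw [hvz]; abel
        rw [this]
        exact Submodule.sub_mem _ hvW (Submodule.smul_mem _ a huW)
      have hz0 : z ≠ 0 := by
        intro h0
        apply hv
        rw [h0, add_zero] at hvz
        exact hvz ▸ Submodule.smul_mem _ a (Submodule.mem_span_singleton_self u)
      exact (Submodule.ne_bot_iff _).2 ⟨z, Submodule.mem_inf.2 ⟨hzW, hz⟩, hz0⟩
  · rintro ⟨W, hW2, huW, hWl⟩
    have hWK : W ≤ LinearMap.ker (Matrix.of φ).mulVecLin := by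
      intro w hw
      refine (mem_kerA φ).2 fun i => ?_
      obtain ⟨z, hzm, hz0⟩ := (Submodule.ne_bot_iff _).1 (hWl i)
      obtain ⟨hzW, hzl⟩ := Submodule.mem_inf.1 hzm
      have hLIuz : LinearIndependent ℂ ![u, z] := by
        refine linearIndependent_fin2.2 ⟨hz0, fun a ha => hu i ?_⟩
        simp only [Matrix.cons_val_zero, Matrix.cons_val_one, Matrix.head_cons] at ha
        exact ha ▸ Submodule.smul_mem _ a hzl
      have hfr : finrank ℂ (span ℂ ({u, z} : Set (Fin 4 → ℂ))) = 2 := by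
        have := finrank_span_eq_card hLIuz
        rwa [range_two, Fintype.card_fin] at this
      have hle : span ℂ ({u, z} : Set (Fin 4 → ℂ)) ≤ W :=
        span_le.2 (by rintro t (rfl | rfl); exacts [huW, hzW])
      have hWeq : span ℂ ({u, z} : Set (Fin 4 → ℂ)) = W :=
        eq_of_le_of_finrank_le hle (by rw [hW2, hfr])
      rw [← hWeq] at hw
      obtain ⟨a, b, rfl⟩ := Submodule.mem_span_pair.1 hw
      rw [hφ i]
      simp [dotProduct_add, dotProduct_smul, dot_u, dot_line _ _ _ _ hzl]
    have := Submodule.finrank_mono hWK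
    rw [hW2] at this
    exact this
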